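/- arXiv:1905.00993 — 8 statements merged into one kernel-verified Lean document; each statement's English description precedes it below -/
import Mathlib

section
/- Games as complete pairs: (1) For every nonempty prefix-closed set P ⊆ List M, the set ts(P) of all t-skeletons on P is a consistent set of t-skeletons, its union ⋃ ts(P) equals P, and ts(P) is complete. (2) Conversely, for every complete set 𝒮 of t-skeletons, the subsets of ⋃𝒮 satisfying (Tree), (Edet) and (Oinc) relative to ⋃𝒮 (i.e. the t-skeletons on the union) are precisely the elements of 𝒮. -/
/-!
Games as complete pairs (Theorem 3.17 of "Game semantics of Martin-Löf type theory").
Positions are finite lists over a type `M` of moves.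
-/

namespace GameSemantics

variable {M : Type*}

/-- A set of positions is prefix-closed: every prefix of a member belongs to it. -/
def PrefClosed (X : Set (List M)) : Prop :=
  ∀ ⦃s t : List M⦄, s <+: t → t ∈ X → s ∈ X

/-- (Tree): nonempty and prefix-closed. -/
def Tree (S : Set (List M)) : Prop :=
  S.Nonempty ∧ ∀ (s : List M) (m : M), s ++ [m] ∈ S → s ∈ S

/-- (Edet): determinacy on even-length positions. -/
def Edet (S : Set (List M)) : Prop :=
  ∀ (s : List M) (m n n' : M), s ++ [m, n] ∈ S → s ++ [m, n'] ∈ S →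
    Even (s ++ [m, n]).length → n = n'

/-- (Oinc) relative to `P`: inclusiveness on odd-length positions of `P`. -/
def Oinc (S P : Set (List M)) : Prop :=
  ∀ (s : List M) (m : M), s ++ [m] ∈ P → Odd (s ++ [m]).length → s ∈ S → s ++ [m] ∈ S

/-- A t-skeleton on `P`: a subset of `P` satisfying (Tree), (Edet) and (Oinc)
relative to `P`. -/
def TSkelOn (P S : Set (List M)) : Prop :=
  S ⊆ P ∧ Tree S ∧ Edet S ∧ Oinc S P

/-- Consistency `σ ≍ τ` of two t-skeletons. -/
def ConsistentPair (σ τ : Set (List M)) : Prop :=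
  ∀ (s : List M) (m : M), s ++ [m] ∈ σ ∪ τ → Odd (s ++ [m]).length →
    s ∈ σ ∩ τ → s ++ [m] ∈ σ ∩ τ

/-- A consistent set of t-skeletons: nonempty, each member satisfying (Tree) and
(Edet), and pairwise consistent. -/
def ConsistentSet (𝒮 : Set (Set (List M))) : Prop :=
  𝒮.Nonempty ∧ (∀ S ∈ 𝒮, Tree S ∧ Edet S) ∧
    ∀ σ ∈ 𝒮, ∀ τ ∈ 𝒮, ConsistentPair σ τ

/-- A complete set of t-skeletons: consistent, and every subset of the union
satisfying (Tree), (Edet) and (Oinc) relative to the union belongs to it. -/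
def CompleteSet (𝒮 : Set (Set (List M))) : Prop :=
  ConsistentSet 𝒮 ∧
    ∀ A : Set (List M), A ⊆ ⋃₀ 𝒮 → Tree A → Edet A → Oinc A (⋃₀ 𝒮) → A ∈ 𝒮

private lemma prefix_concat_cases {r s : List M} {m : M} (h : r <+: s ++ [m]) :
    r <+: s ∨ r = s ++ [m] := by
  rcases le_or_gt r.length s.length with hle | hlt
  · exact Or.inl (List.prefix_of_prefix_length_le h (List.prefix_append s [m]) hle)
  · right
    apply h.eq_of_length
    have := h.length_le
    simp only [List.length_append, List.length_singleton] at this ⊢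
    omega

/-- The t-skeleton determined by a single position `p ∈ P`. -/
private def sk (P : Set (List M)) (p : List M) : Set (List M) :=
  {t | t ∈ P ∧ ∀ r, r <+: t → Even r.length → r <+: p}

private lemma sk_tskel {P : Set (List M)} (hPC : PrefClosed P) {p : List M}
    (hp : p ∈ P) : TSkelOn P (sk P p) ∧ p ∈ sk P p := by
  have hself : p ∈ sk P p := ⟨hp, fun r hr _ => hr⟩
  refine ⟨⟨fun t ht => ht.1, ⟨⟨p, hself⟩, ?_⟩, ?_, ?_⟩, hself⟩
  · rintro s m ⟨hsP, hpre⟩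
    exact ⟨hPC (List.prefix_append s [m]) hsP,
      fun r hr he => hpre r (hr.trans (List.prefix_append s [m])) he⟩
  · rintro s m n n' ⟨_, h1⟩ ⟨_, h2⟩ hev
    have e1 : s ++ [m, n] <+: p := h1 _ List.prefix_rfl hev
    have e2 : s ++ [m, n'] <+: p := by
      apply h2 _ List.prefix_rfl
      simpa using hev
    have hlen : (s ++ [m, n]).length ≤ (s ++ [m, n']).length := by simp
    have := (List.prefix_of_prefix_length_le e1 e2 hlen).eq_of_length (by simp)
    simpa using this
  · rintro s m hmP hodd ⟨hsP, hpre⟩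
    refine ⟨hmP, fun r hr he => ?_⟩
    rcases prefix_concat_cases hr with h | h
    · exact hpre r h he
    · subst h
      exact absurd he (Nat.not_even_iff_odd.mpr hodd)

/-- **Games as complete pairs**: (1) for every nonempty prefix-closed `P`, the set of
all t-skeletons on `P` is consistent, has union `P`, and is complete; (2) conversely,
for every complete set `𝒮` of t-skeletons, the t-skeletons on the union `⋃₀ 𝒮` are
precisely the elements of `𝒮`. -/
theorem games_as_complete_pairs :
    (∀ P : Set (List M), P.Nonempty → PrefClosed P →
      ConsistentSet {S : Set (List M) | TSkelOn P S} ∧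
        ⋃₀ {S : Set (List M) | TSkelOn P S} = P ∧
        CompleteSet {S : Set (List M) | TSkelOn P S}) ∧
    (∀ 𝒮 : Set (Set (List M)), CompleteSet 𝒮 →
      {A : Set (List M) | TSkelOn (⋃₀ 𝒮) A} = 𝒮) := by

  constructor
  · intro P hPne hPC
    have hUnion : ⋃₀ {S : Set (List M) | TSkelOn P S} = P := by
      apply Set.eq_of_subset_of_subset
      · rintro t ⟨S, hS, htS⟩
        exact hS.1 htS
      · intro p hp
        exact ⟨sk P p, (sk_tskel hPC hp).1, (sk_tskel hPC hp).2⟩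
    have hcons : ConsistentSet {S : Set (List M) | TSkelOn P S} := by
      refine ⟨⟨sk P hPne.choose, (sk_tskel hPC hPne.choose_spec).1⟩,
        fun S hS => ⟨hS.2.1, hS.2.2.1⟩, ?_⟩
      rintro σ hσ τ hτ s m hm hodd ⟨hsσ, hsτ⟩
      have hmP : s ++ [m] ∈ P := by
        rcases hm with h | h
        · exact hσ.1 h
        · exact hτ.1 h
      exact ⟨hσ.2.2.2 s m hmP hodd hsσ, hτ.2.2.2 s m hmP hodd hsτ⟩
    refine ⟨hcons, hUnion, hcons, ?_⟩
    intro A hA hT hE hO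
    rw [hUnion] at hA hO
    exact ⟨hA, hT, hE, hO⟩
  · intro 𝒮 h𝒮
    apply Set.eq_of_subset_of_subset
    · intro A hA
      exact h𝒮.2 A hA.1 hA.2.1 hA.2.2.1 hA.2.2.2
    · intro S hS
      refine ⟨fun t ht => ⟨S, hS, ht⟩, (h𝒮.1.2.1 S hS).1, (h𝒮.1.2.1 S hS).2, ?_⟩
      rintro s m ⟨τ, hτ, hmτ⟩ hodd hsS
      have hsτ : s ∈ τ := (h𝒮.1.2.1 τ hτ).1.2 s m hmτ
      exact (h𝒮.1.2.2 S hS τ hτ s m (Or.inr hmτ) hodd ⟨hsS, hsτ⟩).1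


end GameSemantics
end

section
/- Games as validly complete pairs: Let P ⊆ List M be nonempty and prefix-closed and ≃ an identification of positions on P. (1) Every position s ∈ P belongs to some valid t-skeleton on P; hence the set vts(P) of all valid t-skeletons on P is consistent, has union equal to P, and the pair (vts(P), ≃) is validly complete. (2) If 𝒮 is a consistent set of t-skeletons and ≈ is an identification of positions on ⋃𝒮 such that the pair (𝒮, ≈) is validly complete — i.e. every member of 𝒮 is a valid t-skeleton on ⋃𝒮 (with respect to ≈), and every valid t-skeleton on ⋃𝒮 belongs to 𝒮 — then the valid t-skeletons on the union ⋃𝒮 are precisely the elements of 𝒮. -/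
/-!
Games as validly complete pairs (Corollary 3.21 of "Game semantics of
Martin-Löf type theory").  Positions are finite lists over a type `M` of moves.
-/

namespace GameSemantics

variable {M : Type*}

/-- An identification of positions on `P`: an equivalence relation on `P`
satisfying the axioms I1, I2 and I3. -/
structure IsIdent (P : Set (List M)) (R : List M → List M → Prop) : Prop where
  mem_left : ∀ ⦃s t : List M⦄, R s t → s ∈ P
  mem_right : ∀ ⦃s t : List M⦄, R s t → t ∈ P
  refl : ∀ s ∈ P, R s s
  symm : ∀ ⦃s t : List M⦄, R s t → R t s
  trans : ∀ ⦃s t u : List M⦄, R s t → R t u → R s u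
  length_eq : ∀ ⦃s t : List M⦄, R s t → s.length = t.length
  init : ∀ ⦃s t : List M⦄ ⦃m n : M⦄, R (s ++ [m]) (t ++ [n]) → R s t
  extend : ∀ ⦃s t : List M⦄ (m : M), R s t → s ++ [m] ∈ P →
    ∃ n : M, t ++ [n] ∈ P ∧ R (s ++ [m]) (t ++ [n])

/-- `S ≲ T` for t-skeletons on `(P, R)`. -/
def TLe (P : Set (List M)) (R : List M → List M → Prop)
    (S T : Set (List M)) : Prop :=
  ∀ (s : List M) (m n : M), s ++ [m, n] ∈ S → Even (s ++ [m, n]).length →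
    ∀ (t : List M) (l : M), t ++ [l] ∈ T → Odd (t ++ [l]).length →
      R (s ++ [m]) (t ++ [l]) →
      ∃ r : M, t ++ [l, r] ∈ T ∧ R (s ++ [m, n]) (t ++ [l, r])

/-- `S ≃ T` for t-skeletons on `(P, R)`. -/
def TEquiv (P : Set (List M)) (R : List M → List M → Prop)
    (S T : Set (List M)) : Prop :=
  TLe P R S T ∧ TLe P R T S

/-- Validity of a t-skeleton on `(P, R)`. -/
def TValid (P : Set (List M)) (R : List M → List M → Prop)
    (S : Set (List M)) : Prop :=
  TEquiv P R S S

/-- The set of all valid t-skeletons on `(P, R)`. -/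
def vts (P : Set (List M)) (R : List M → List M → Prop) : Set (Set (List M)) :=
  {S : Set (List M) | TSkelOn P S ∧ TValid P R S}

/-- A set `𝒮` of t-skeletons is validly complete w.r.t. `R`: every member is a
valid t-skeleton on the union `⋃₀ 𝒮`, and every valid t-skeleton on the union
belongs to `𝒮`. -/
def ValidlyComplete (R : List M → List M → Prop) (𝒮 : Set (Set (List M))) : Prop :=
  (∀ σ ∈ 𝒮, TSkelOn (⋃₀ 𝒮) σ ∧ TValid (⋃₀ 𝒮) R σ) ∧
    ∀ A : Set (List M), TSkelOn (⋃₀ 𝒮) A → TValid (⋃₀ 𝒮) R A → A ∈ 𝒮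

/-! Auxiliary -/

lemma snoc_inj {x y : List M} {a b : M} (h : x ++ [a] = y ++ [b]) : x = y ∧ a = b := by
  have := List.append_inj' h rfl
  simpa using this

/-- Admissible extensions: `q` has an answer `r` in `P` tracking `s`. -/
def Ext (P : Set (List M)) (R : List M → List M → Prop) (s q : List M) : Prop :=
  ∃ r : M, q ++ [r] ∈ P ∧ R (s.take (q.length + 1)) (q ++ [r]) ∧
    (q <+: s → q ++ [r] <+: s)

/-- The canonical t-skeleton through `s`. -/
inductive Str (P : Set (List M)) (R : List M → List M → Prop) (s : List M) :
    List M → Prop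
  | nil : Str P R s []
  | oinc (t : List M) (m : M) : Str P R s t → t ++ [m] ∈ P →
      Odd (t ++ [m]).length → Str P R s (t ++ [m])
  | resp (q : List M) (h : Ext P R s q) : Str P R s q → Odd q.length →
      Str P R s (q ++ [h.choose])

variable {P : Set (List M)} {R : List M → List M → Prop} {s : List M}

lemma str_mem_P (hne : P.Nonempty) (hP : PrefClosed P) :
    ∀ {t : List M}, Str P R s t → t ∈ P := by
  intro t h
  induction h with
  | nil => obtain ⟨x, hx⟩ := hne; exact hP List.nil_prefix hx
  | oinc t m _ hm _ => exact hm
  | resp q h _ _ _ => exact h.choose_spec.1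

lemma str_even_R (hne : P.Nonempty) (hP : PrefClosed P) (hI : IsIdent P R) :
    ∀ {t : List M}, Str P R s t → Even t.length → R (s.take t.length) t := by
  intro t h
  induction h with
  | nil =>
      intro _
      simpa using hI.refl [] (by obtain ⟨x, hx⟩ := hne; exact hP List.nil_prefix hx)
  | oinc t m _ hm hodd _ =>
      intro hev
      exact absurd hev (Nat.not_even_iff_odd.mpr hodd)
  | resp q h _ _ _ =>
      intro _
      have := h.choose_spec.2.1
      simpa [List.length_append] using this

/-- Inversion for snoc members of the canonical skeleton. -/
lemma str_inv {u : List M} (h : Str P R s u) {q : List M} {a : M} (he : u = q ++ [a]) :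
    Str P R s q ∧ (Odd (q ++ [a]).length ∨ ∃ hE : Ext P R s q, a = hE.choose) := by
  cases h with
  | nil => exact absurd he.symm (by simp)
  | oinc t m ht hm hodd =>
      obtain ⟨rfl, rfl⟩ := snoc_inj he
      exact ⟨ht, Or.inl hodd⟩
  | resp q' hE hq' hodd =>
      obtain ⟨h1, h2⟩ := snoc_inj he
      subst h1
      exact ⟨hq', Or.inr ⟨hE, h2.symm⟩⟩

lemma str_take (hP : PrefClosed P) (hI : IsIdent P R) (hs : s ∈ P) :
    ∀ k, k ≤ s.length → Str P R s (s.take k) := by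
  intro k
  induction k with
  | zero => intro _; simpa using Str.nil
  | succ k ih =>
      intro hk1
      have hk : k < s.length := hk1
      have ihk := ih (le_of_lt hk)
      have hconcat : s.take k ++ [s[k]] = s.take (k + 1) := by simp
      have hmemP : s.take (k + 1) ∈ P := hP (List.take_prefix _ s) hs
      have hlenk : (s.take k).length = k := by simp [List.length_take]; omega
      rcases Nat.even_or_odd k with he | ho
      · rw [← hconcat]
        refine Str.oinc _ _ ihk (by rw [hconcat]; exact hmemP) ?_
        simp only [List.length_append, List.length_cons, List.length_nil, hlenk]
        exact Even.add_one he
      · have hodd : Odd (s.take k).length := by rw [hlenk]; exact ho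
        have hE : Ext P R s (s.take k) := by
          refine ⟨s[k], ?_, ?_, fun _ => ?_⟩
          · rw [hconcat]; exact hmemP
          · rw [hlenk, hconcat]; exact hI.refl _ hmemP
          · rw [hconcat]; exact List.take_prefix _ s
        have h1 := Str.resp _ hE ihk hodd
        have h2 : s.take k ++ [hE.choose] = s.take (k + 1) := by
          have hpre := hE.choose_spec.2.2 (List.take_prefix k s)
          have h3 := List.prefix_iff_eq_take.mp hpre
          rw [h3]
          congr 1
          simp [hlenk]
        rwa [h2] at h1

lemma str_self (hP : PrefClosed P) (hI : IsIdent P R) (hs : s ∈ P) :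
    Str P R s s := by
  simpa using str_take hP hI hs s.length le_rfl

lemma str_tle (hne : P.Nonempty) (hP : PrefClosed P) (hI : IsIdent P R) (hs : s ∈ P) :
    TLe P R {t | Str P R s t} {t | Str P R s t} := by
  intro t0 m n h1 hev t l h2 hodd hR
  obtain ⟨hq0, hor⟩ := str_inv h1 (by simp : t0 ++ [m, n] = (t0 ++ [m]) ++ [n])
  have hev' : Even ((t0 ++ [m]) ++ [n]).length := by simpa using hev
  rcases hor with ho | ⟨hE0, rfl⟩
  · exact absurd hev' (Nat.not_even_iff_odd.mpr ho)
  have hRs : R (s.take ((t0 ++ [m]).length + 1)) ((t0 ++ [m]) ++ [hE0.choose]) :=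
    hE0.choose_spec.2.1
  set k := (t0 ++ [m]).length with hkdef
  have hkval : k = t0.length + 1 := by simp [hkdef]
  have hk1 : k + 1 ≤ s.length := by
    have := hI.length_eq hRs
    simp [List.length_take] at this
    omega
  have hk : k < s.length := by omega
  have hconcat : s.take k ++ [s[k]] = s.take (k + 1) := by simp
  have hRs' : R (s.take k ++ [s[k]]) ((t0 ++ [m]) ++ [hE0.choose]) := by
    rw [hconcat]; exact hRs
  have hinit : R (s.take k) (t0 ++ [m]) := hI.init hRs'
  have hlen : (t ++ [l]).length = k := (hI.length_eq hR).symm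
  have hRtl : R (s.take k) (t ++ [l]) := hI.trans hinit hR
  have hmemP : s.take (k + 1) ∈ P := hP (List.take_prefix _ s) hs
  have hE : Ext P R s (t ++ [l]) := by
    by_cases hpre : (t ++ [l]) <+: s
    · have heq : t ++ [l] = s.take k := by
        have h3 := List.prefix_iff_eq_take.mp hpre
        rw [h3, hlen]
      refine ⟨s[k], ?_, ?_, fun _ => ?_⟩
      · rw [heq, hconcat]; exact hmemP
      · rw [hlen, heq, hconcat]; exact hI.refl _ hmemP
      · rw [heq, hconcat]; exact List.take_prefix _ s
    · obtain ⟨r, hrP, hrR⟩ := hI.extend s[k] hRtl (by rw [hconcat]; exact hmemP)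
      exact ⟨r, hrP, by rw [hlen, ← hconcat]; exact hrR, fun hp => absurd hp hpre⟩
  have hmemS : Str P R s ((t ++ [l]) ++ [hE.choose]) := Str.resp _ hE h2 hodd
  have hRr : R (s.take ((t ++ [l]).length + 1)) ((t ++ [l]) ++ [hE.choose]) :=
    hE.choose_spec.2.1
  have hx : s.take ((t ++ [l]).length + 1) = s.take (k + 1) := by rw [hlen]
  have hRr' : R (s.take (k + 1)) (t ++ [l] ++ [Exists.choose hE]) :=
    Eq.mp (congrArg (fun u => R u (t ++ [l] ++ [Exists.choose hE])) hx) hRr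
  refine ⟨hE.choose, by simpa using hmemS, ?_⟩
  have := hI.trans (hI.symm hRs) hRr'
  simpa using this

lemma str_vts (hne : P.Nonempty) (hP : PrefClosed P) (hI : IsIdent P R) (hs : s ∈ P) :
    {t | Str P R s t} ∈ vts P R ∧ s ∈ {t | Str P R s t} := by
  refine ⟨⟨⟨fun t ht => str_mem_P hne hP ht, ?_, ?_, ?_⟩, ?_, ?_⟩,
    str_self hP hI hs⟩
  · exact ⟨⟨[], Str.nil⟩, fun t m h => (str_inv h rfl).1⟩
  · intro t m n n' h1 h2 hev
    obtain ⟨_, hor1⟩ := str_inv h1 (by simp : t ++ [m, n] = (t ++ [m]) ++ [n])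
    obtain ⟨_, hor2⟩ := str_inv h2 (by simp : t ++ [m, n'] = (t ++ [m]) ++ [n'])
    have hev' : Even ((t ++ [m]) ++ [n]).length := by simpa using hev
    have hev'' : Even ((t ++ [m]) ++ [n']).length := by
      simp only [List.length_append] at hev' ⊢; simpa using hev'
    rcases hor1 with ho | ⟨hE1, rfl⟩
    · exact absurd hev' (Nat.not_even_iff_odd.mpr ho)
    rcases hor2 with ho | ⟨hE2, rfl⟩
    · exact absurd hev'' (Nat.not_even_iff_odd.mpr ho)
    rw [Subsingleton.elim hE1 hE2]
  · exact fun t m hm ho ht => Str.oinc t m ht hm ho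
  · exact str_tle hne hP hI hs
  · exact str_tle hne hP hI hs

/-- **Games as validly complete pairs**: (1) every position of `P` belongs to some
valid t-skeleton on `P`; hence the set `vts P R` of all valid t-skeletons on `P` is
consistent, has union `P`, and the pair `(vts P R, R)` is validly complete.
(2) Conversely, if `𝒮` is a consistent set of t-skeletons and `R` an identification
of positions on `⋃₀ 𝒮` such that `(𝒮, R)` is validly complete, then the valid
t-skeletons on the union are precisely the elements of `𝒮`. -/
theorem games_as_validly_complete_pairs :
    (∀ (P : Set (List M)) (R : List M → List M → Prop),
      P.Nonempty → PrefClosed P → IsIdent P R →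
      (∀ s ∈ P, ∃ S ∈ vts P R, s ∈ S) ∧
        ConsistentSet (vts P R) ∧ ⋃₀ vts P R = P ∧
        ValidlyComplete R (vts P R)) ∧
    (∀ (𝒮 : Set (Set (List M))) (R : List M → List M → Prop),
      ConsistentSet 𝒮 → IsIdent (⋃₀ 𝒮) R → ValidlyComplete R 𝒮 →
      {A : Set (List M) | TSkelOn (⋃₀ 𝒮) A ∧ TValid (⋃₀ 𝒮) R A} = 𝒮) := by
  constructor
  · intro P R hne hP hI
    have hmem : ∀ s ∈ P, ∃ S ∈ vts P R, s ∈ S := fun s hs =>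
      ⟨{t | Str P R s t}, (str_vts hne hP hI hs).1, (str_vts hne hP hI hs).2⟩
    have hU : ⋃₀ vts P R = P := by
      apply Set.Subset.antisymm
      · intro x hx
        obtain ⟨S, hS, hxS⟩ := hx
        exact hS.1.1 hxS
      · intro x hx
        obtain ⟨S, hS, hxS⟩ := hmem x hx
        exact ⟨S, hS, hxS⟩
    refine ⟨hmem, ⟨?_, ?_, ?_⟩, hU, ?_, ?_⟩
    · obtain ⟨x, hx⟩ := hne
      obtain ⟨S, hS, _⟩ := hmem x hx
      exact ⟨S, hS⟩
    · exact fun S hS => ⟨hS.1.2.1, hS.1.2.2.1⟩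
    · intro σ hσ τ hτ u m hm hodd hu
      have hmP : u ++ [m] ∈ P := by
        rcases hm with h | h
        · exact hσ.1.1 h
        · exact hτ.1.1 h
      exact ⟨hσ.1.2.2.2 u m hmP hodd hu.1, hτ.1.2.2.2 u m hmP hodd hu.2⟩
    · intro σ hσ
      rw [hU]
      exact hσ
    · intro A h1 h2
      rw [hU] at h1 h2
      exact ⟨h1, h2⟩
  · intro 𝒮 R _ _ hVC
    ext A
    simp only [Set.mem_setOf_eq]
    exact ⟨fun ⟨h1, h2⟩ => hVC.2 A h1 h2, fun hA => hVC.1 A hA⟩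


end GameSemantics
end

section
/- First skeleton/strategy lemma: Let P ⊆ List M be nonempty and prefix-closed and ≃ an identification of positions on P. For every strategy g on (P, ≃) there exists a valid skeleton σ on P such that σ ∝ g. -/
/-!
First skeleton/strategy lemma (Lemma 3.35 of "Game semantics of Martin-Löf type
theory").  Positions are finite lists over a type `M` of moves.
-/

namespace GameSemantics

variable {M : Type*}

/-- A skeleton on `P`: a nonempty, even-prefix-closed, deterministic subset of
`P^Even`. -/
def IsSkeleton (P σ : Set (List M)) : Prop :=
  σ ⊆ P ∧ (∀ s ∈ σ, Even s.length) ∧ σ.Nonempty ∧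
    (∀ (s : List M) (m n : M), s ++ [m, n] ∈ σ → s ∈ σ) ∧
    (∀ (s : List M) (m n n' : M), s ++ [m, n] ∈ σ → s ++ [m, n'] ∈ σ → n = n')

/-- A strategy on `(P, R)`: a nonempty, even-prefix-closed subset of `P^Even`
that is deterministic up to `R` (ST2) and representation independent (ST3). -/
def IsStrategy (P : Set (List M)) (R : List M → List M → Prop)
    (g : Set (List M)) : Prop :=
  g ⊆ P ∧ (∀ s ∈ g, Even s.length) ∧ g.Nonempty ∧
    (∀ (s : List M) (m n : M), s ++ [m, n] ∈ g → s ∈ g) ∧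
    (∀ (s t : List M) (m n l r : M), s ++ [m, n] ∈ g → t ++ [l, r] ∈ g →
      R (s ++ [m]) (t ++ [l]) → R (s ++ [m, n]) (t ++ [l, r])) ∧
    (∀ s t : List M, s ∈ g → t ∈ P → R s t → t ∈ g)

/-- A skeleton `σ` implements a strategy `g`, written `σ ∝ g`. -/
def Implements (R : List M → List M → Prop) (σ g : Set (List M)) : Prop :=
  σ ⊆ g ∧
    ∀ (s : List M) (m n : M), s ++ [m, n] ∈ g → s ∈ σ →
      ∃ n' : M, s ++ [m, n'] ∈ σ ∧ R (s ++ [m, n]) (s ++ [m, n'])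

/-- `σ ≲ τ` for skeletons on `(P, R)`. -/
def SkelLe (P : Set (List M)) (R : List M → List M → Prop)
    (σ τ : Set (List M)) : Prop :=
  ∀ (s : List M) (m n : M), s ++ [m, n] ∈ σ →
    ∀ t ∈ τ, ∀ l : M, t ++ [l] ∈ P → R (s ++ [m]) (t ++ [l]) →
      ∃ r : M, t ++ [l, r] ∈ τ ∧ R (s ++ [m, n]) (t ++ [l, r])

/-- Validity of a skeleton on `(P, R)`: `σ ≃ σ`, i.e. `σ ≲ σ`. -/
def SkelValid (P : Set (List M)) (R : List M → List M → Prop)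
    (σ : Set (List M)) : Prop :=
  SkelLe P R σ σ ∧ SkelLe P R σ σ

private lemma prefix_pair_cases {u s : List M} {a b m n : M} (hs : Even s.length)
    (hu : Even u.length) (h : u ++ [m, n] <+: s ++ [a, b]) :
    u ++ [m, n] <+: s ∨ (u = s ∧ m = a ∧ n = b) := by
  have hl := h.length_le
  simp at hl
  rcases lt_or_ge (u.length + 2) (s.length + 1) with hlt | hle
  · left
    rw [List.prefix_iff_eq_take] at h ⊢
    rw [List.take_append_of_le_length (by simp; omega)] at h
    exact h
  · have hlen : u.length + 2 = s.length + 2 := by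
      obtain ⟨k, hk⟩ := hs; obtain ⟨j, hj⟩ := hu; omega
    right
    have he := h.eq_of_length (by simpa using hlen)
    obtain ⟨h1, h2⟩ := List.append_inj he (by omega)
    simp at h2
    exact ⟨h1, h2.1, h2.2⟩

private lemma nil_mem_aux {g : Set (List M)} (hev : ∀ s ∈ g, Even s.length)
    (hne : g.Nonempty) (hpc : ∀ (s : List M) (m n : M), s ++ [m, n] ∈ g → s ∈ g) :
    ([] : List M) ∈ g := by
  obtain ⟨s, hs⟩ := hne
  suffices H : ∀ (k : ℕ) (s : List M), s.length = k → s ∈ g → ([] : List M) ∈ g from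
    H s.length s rfl hs
  intro k
  induction k using Nat.strong_induction_on with
  | _ k ih =>
    intro s hlen hsg
    rcases s.eq_nil_or_concat with rfl | ⟨u, b, rfl⟩
    · exact hsg
    rcases u.eq_nil_or_concat with rfl | ⟨t, a, rfl⟩
    · exact absurd (hev _ hsg) (by simp)
    · have hmem : t ++ [a, b] ∈ g := by simpa using hsg
      exact ih t.length (by simp at hlen; omega) t rfl (hpc _ _ _ hmem)

/-- **First skeleton/strategy lemma**: every strategy on `(P, R)` is implemented
by some valid skeleton on `P`. -/
theorem first_skeleton_strategy_lemma (P : Set (List M))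
    (R : List M → List M → Prop) (hPne : P.Nonempty) (hPpc : PrefClosed P)
    (hR : IsIdent P R) (g : Set (List M)) (hg : IsStrategy P R g) :
    ∃ σ : Set (List M), IsSkeleton P σ ∧ SkelValid P R σ ∧ Implements R σ g := by
  obtain ⟨hgP, hgev, hgne, hgpc, hST2, hST3⟩ := hg
  have hnil : ([] : List M) ∈ g := nil_mem_aux hgev hgne hgpc
  have hch : ∀ (t : List M) (m : M), (∃ r, t ++ [m, r] ∈ g) → ∃ r, t ++ [m, r] ∈ g :=
    fun _ _ h => h
  choose F hF using hch
  -- the skeleton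
  set σ : Set (List M) :=
    {s | s ∈ g ∧ ∀ (t : List M) (m n : M), t ++ [m, n] <+: s →
      ∀ hw : ∃ r, t ++ [m, r] ∈ g, n = F t m hw} with hσdef
  have hσg : σ ⊆ g := fun s hs => hs.1
  have hσev : ∀ s ∈ σ, Even s.length := fun s hs => hgev s (hσg hs)
  -- evenness from a witness
  have hwev : ∀ (t : List M) (m : M), (∃ r, t ++ [m, r] ∈ g) → Even t.length := by
    intro t m ⟨r, hr⟩
    obtain ⟨k, hk⟩ := hgev _ hr
    simp at hk
    exact ⟨k - 1, by omega⟩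
  -- the key extension property
  have hstep : ∀ t ∈ σ, ∀ (l : M) (hw : ∃ r, t ++ [l, r] ∈ g),
      t ++ [l, F t l hw] ∈ σ := by
    intro t ht l hw
    refine ⟨hF t l hw, ?_⟩
    intro u m n hpre hw'
    rcases prefix_pair_cases (hσev t ht) (hwev u m hw') hpre with hpre' | ⟨rfl, rfl, rfl⟩
    · exact ht.2 u m n hpre' hw'
    · rfl
  -- skeleton structure
  have hskel : IsSkeleton P σ := by
    refine ⟨fun s hs => hgP (hσg hs), hσev, ⟨[], hnil, ?_⟩, ?_, ?_⟩
    · intro t m n h hw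
      simp at h
    · intro s m n hs
      refine ⟨hgpc s m n hs.1, ?_⟩
      intro u a b h hw
      exact hs.2 u a b (h.trans (List.prefix_append _ _)) hw
    · intro s m n n' hn hn'
      have hw : ∃ r, s ++ [m, r] ∈ g := ⟨n, hn.1⟩
      have h1 := hn.2 s m n List.prefix_rfl hw
      have h2 := hn'.2 s m n' List.prefix_rfl hw
      rw [h1, h2]
  -- σ ≲ σ
  have hle : SkelLe P R σ σ := by
    intro s m n hsmn t ht l htl hRml
    have hsg : s ++ [m, n] ∈ g := hσg hsmn
    have hsP : (s ++ [m]) ++ [n] ∈ P := by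
      rw [List.append_assoc]; exact hgP hsg
    obtain ⟨r0, hr0P, hr0R⟩ := hR.extend n hRml hsP
    have hr0R' : R (s ++ [m, n]) ((t ++ [l]) ++ [r0]) := by
      rwa [List.append_assoc] at hr0R
    have hr0g : t ++ [l, r0] ∈ g := by
      have := hST3 _ _ hsg hr0P hr0R'
      rwa [List.append_assoc] at this
    have hw : ∃ r, t ++ [l, r] ∈ g := ⟨r0, hr0g⟩
    refine ⟨F t l hw, hstep t ht l hw, ?_⟩
    exact hST2 s t m n l (F t l hw) hsg (hF t l hw) hRml
  -- implementation
  have himp : Implements R σ g := by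
    refine ⟨hσg, ?_⟩
    intro s m n hsg hsσ
    have hw : ∃ r, s ++ [m, r] ∈ g := ⟨n, hsg⟩
    refine ⟨F s m hw, hstep s hsσ m hw, ?_⟩
    have hsmP : s ++ [m] ∈ P := by
      refine hPpc ⟨[n], ?_⟩ (hgP hsg)
      simp
    exact hST2 s s m n m (F s m hw) hsg (hF s m hw) (hR.refl _ hsmP)
  exact ⟨σ, hskel, ⟨hle, hle⟩, himp⟩

end GameSemantics
end

section
/- Second skeleton/strategy lemma: Let P ⊆ List M be nonempty and prefix-closed and ≃ an identification of positions on P. If σ is a skeleton on P and g a strategy on (P, ≃) with σ ∝ g, then for all s·m·n ∈ g, s̃ ∈ σ and s̃·m̃ ∈ P with s·m ≃ s̃·m̃, there exists s̃·m̃·ñ ∈ σ with s·m·n ≃ s̃·m̃·ñ. -/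
namespace GameSemantics

variable {M : Type*}

/-- **Second skeleton/strategy lemma**: if a skeleton `σ` on `P` implements a
strategy `g` on `(P, R)`, then for all `s·m·n ∈ g`, `s̃ ∈ σ` and `s̃·m̃ ∈ P` with
`s·m ≃ s̃·m̃`, there exists `s̃·m̃·ñ ∈ σ` with `s·m·n ≃ s̃·m̃·ñ`. -/
theorem second_skeleton_strategy_lemma (P : Set (List M))
    (R : List M → List M → Prop) (hPne : P.Nonempty) (hPpc : PrefClosed P)
    (hR : IsIdent P R) (σ g : Set (List M)) (hσ : IsSkeleton P σ)
    (hg : IsStrategy P R g) (himpl : Implements R σ g) :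
    ∀ (s : List M) (m n : M), s ++ [m, n] ∈ g →
      ∀ s' ∈ σ, ∀ m' : M, s' ++ [m'] ∈ P → R (s ++ [m]) (s' ++ [m']) →
        ∃ n' : M, s' ++ [m', n'] ∈ σ ∧ R (s ++ [m, n]) (s' ++ [m', n']) := by
  intro s m n hsmn s' hs' m' hs'm' hRsm
  obtain ⟨hgP, _, _, _, _, hST3⟩ := hg
  -- extend R(s'++[m'], s++[m]) by n
  have hsmnP : s ++ [m] ++ [n] ∈ P := by
    have := hgP hsmn
    simpa [List.append_assoc] using this
  obtain ⟨r, hrP, hrR⟩ := hR.extend n hRsm hsmnP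
  have key : ∀ (a : List M) (x y : M), a ++ [x] ++ [y] = a ++ [x, y] := by
    intro a x y; simp
  rw [key] at hrP hrR
  rw [key] at hrR
  -- s'++[m',r] ∈ g by ST3
  have hrg : s' ++ [m', r] ∈ g := hST3 _ _ hsmn hrP hrR
  obtain ⟨_, himp⟩ := himpl
  obtain ⟨n', hn'σ, hn'R⟩ := himp s' m' r hrg hs'
  exact ⟨n', hn'σ, hR.trans hrR hn'R⟩

end GameSemantics
end

section
/- Constraints on skeletons/strategies (totality part): Let P ⊆ List M be nonempty and prefix-closed and ≃ an identification of positions on P. Then: (1) if a strategy g on (P, ≃) is total, then every skeleton σ on P with σ ∝ g is total; (2) if a valid skeleton σ on P is total, then its saturation Sat(σ) is a total strategy on (P, ≃). (This is the totality clause of the paper's lemma; the well-bracketing and noetherianity clauses, which require the label, pointer and P-view structure of positions, are not included.) -/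
/-!
Constraints on skeletons/strategies, totality part (Lemma 3.40 of "Game
semantics of Martin-Löf type theory").  Positions are finite lists over a type
`M` of moves.
-/

namespace GameSemantics

variable {M : Type*}

/-- The saturation `Sat(σ)` of a skeleton `σ`. -/
def Sat (P : Set (List M)) (R : List M → List M → Prop)
    (σ : Set (List M)) : Set (List M) :=
  {s ∈ P | ∃ t ∈ σ, R s t}

/-- Totality of a set of (even-length) positions relative to `P`: every one-move
extension in `P` of a member can be answered within the set. -/
def Total (P X : Set (List M)) : Prop :=
  ∀ (s : List M) (m : M), s ++ [m] ∈ P → s ∈ X → ∃ n : M, s ++ [m, n] ∈ X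


private lemma concat_two {u : List M} (h : 2 ≤ u.length) :
    ∃ (u0 : List M) (a b : M), u = u0 ++ [a, b] := by
  rcases u.eq_nil_or_concat with rfl | ⟨u1, b, rfl⟩
  · simp at h
  rcases u1.eq_nil_or_concat with rfl | ⟨u0, a, rfl⟩
  · simp at h
  · exact ⟨u0, a, b, by simp⟩

/-- **Constraints on skeletons/strategies (totality part)**: (1) any skeleton
implementing a total strategy is total; (2) the saturation of a valid total
skeleton is a total strategy. -/
theorem totality_skeletons_strategies (P : Set (List M))
    (R : List M → List M → Prop) (hPne : P.Nonempty) (hPpc : PrefClosed P)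
    (hR : IsIdent P R) :
    (∀ g σ : Set (List M), IsStrategy P R g → Total P g →
      IsSkeleton P σ → Implements R σ g → Total P σ) ∧
    (∀ σ : Set (List M), IsSkeleton P σ → SkelValid P R σ → Total P σ →
      IsStrategy P R (Sat P R σ) ∧ Total P (Sat P R σ)) := by
  constructor
  · rintro g σ hg hgt hσ ⟨hsub, himp⟩ s m hsm hs
    obtain ⟨n, hn⟩ := hgt s m hsm (hsub hs)
    obtain ⟨n', hn', -⟩ := himp s m n hn hs
    exact ⟨n', hn'⟩
  · rintro σ ⟨hσP, hσEv, hσne, hσpc, hσdet⟩ ⟨hle, -⟩ hσt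
    constructor
    · refine ⟨?_, ?_, ?_, ?_, ?_, ?_⟩
      · rintro s ⟨hsP, -⟩; exact hsP
      · rintro s ⟨-, t, ht, hst⟩
        rw [hR.length_eq hst]; exact hσEv t ht
      · obtain ⟨t, ht⟩ := hσne
        exact ⟨t, hσP ht, t, ht, hR.refl t (hσP ht)⟩
      · rintro s m n ⟨hsP, u, hu, hsu⟩
        have hlen : 2 ≤ u.length := by
          have := hR.length_eq hsu; simp at this; omega
        obtain ⟨u0, a, b, rfl⟩ := concat_two hlen
        have h1 : R (s ++ [m]) (u0 ++ [a]) := by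
          have h : R ((s ++ [m]) ++ [n]) ((u0 ++ [a]) ++ [b]) := by simpa using hsu
          exact hR.init h
        have h2 : R s u0 := hR.init h1
        exact ⟨hR.mem_left h2, u0, hσpc u0 a b hu, h2⟩
      · rintro s t m n l r ⟨hsP, u, hu, hsu⟩ ⟨htP, v, hv, htv⟩ hRst
        have hlu : 2 ≤ u.length := by
          have := hR.length_eq hsu; simp at this; omega
        have hlv : 2 ≤ v.length := by
          have := hR.length_eq htv; simp at this; omega
        obtain ⟨u0, a, b, rfl⟩ := concat_two hlu
        obtain ⟨v0, c, d, rfl⟩ := concat_two hlv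
        have hsu' : R ((s ++ [m]) ++ [n]) ((u0 ++ [a]) ++ [b]) := by simpa using hsu
        have htv' : R ((t ++ [l]) ++ [r]) ((v0 ++ [c]) ++ [d]) := by simpa using htv
        have h1 : R (s ++ [m]) (u0 ++ [a]) := hR.init hsu'
        have h2 : R (t ++ [l]) (v0 ++ [c]) := hR.init htv'
        have hRuv : R (u0 ++ [a]) (v0 ++ [c]) :=
          hR.trans (hR.symm h1) (hR.trans hRst h2)
        have hv0 : v0 ∈ σ := hσpc v0 c d hv
        have hv0c : v0 ++ [c] ∈ P := hR.mem_right h2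
        obtain ⟨r', hr', hRr'⟩ := hle u0 a b hu v0 hv0 c hv0c hRuv
        have hrd : r' = d := hσdet v0 c r' d hr' hv
        subst hrd
        exact hR.trans hsu (hR.trans hRr' (hR.symm htv))
      · rintro s t ⟨-, u, hu, hsu⟩ htP hst
        exact ⟨htP, u, hu, hR.trans (hR.symm hst) hsu⟩
    · rintro s m hsm ⟨hsP, u, hu, hsu⟩
      obtain ⟨a, huaP, hRa⟩ := hR.extend m hsu hsm
      obtain ⟨b, hb⟩ := hσt u a huaP hu
      have hPab : (u ++ [a]) ++ [b] ∈ P := by simpa using hσP hb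
      obtain ⟨n, hnP, hRn⟩ := hR.extend b (hR.symm hRa) hPab
      refine ⟨n, by simpa using hnP, u ++ [a, b], hb, ?_⟩
      have := hR.symm hRn
      simpa using this


end GameSemantics
end

section
/- The identification of skeletons is a partial equivalence relation: Let P ⊆ List M be nonempty and prefix-closed and ≃ an identification of positions on P. Then: (a) if skeletons σ and τ on P satisfy σ ≃ τ, then for every s ∈ σ there exists t ∈ τ with s ≃ t; (b) the identification ≃ of skeletons on (P, ≃) is symmetric and transitive (a PER) on the set of skeletons on P. -/
/-!
The identification of skeletons is a partial equivalence relation (First PER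
lemma and its corollary in "Game semantics of Martin-Löf type theory").
Positions are finite lists over a type `M` of moves.
-/

namespace GameSemantics

variable {M : Type*}

/-- `σ ≃ τ` for skeletons on `(P, R)`. -/
def SkelEquiv (P : Set (List M)) (R : List M → List M → Prop)
    (σ τ : Set (List M)) : Prop :=
  SkelLe P R σ τ ∧ SkelLe P R τ σ


/-- Every nonempty member of a skeleton decomposes as `t ++ [m, n]` with `t` in the
skeleton. -/
lemma skel_decomp {P σ : Set (List M)} (h : IsSkeleton P σ) :
    ∀ s ∈ σ, s ≠ [] → ∃ (t : List M) (m n : M), s = t ++ [m, n] ∧ t ∈ σ := by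
  obtain ⟨hsub, hev, hne, hcl, hdet⟩ := h
  intro s hs hsne
  match hrev : s.reverse with
  | [] => exact absurd (by simpa using congrArg List.reverse hrev) hsne
  | [a] =>
    have hsa : s = [a] := by simpa using congrArg List.reverse hrev
    have hev1 := hev s hs
    rw [hsa] at hev1
    simp [Nat.even_iff] at hev1
  | a :: b :: rest =>
    have hseq : s = rest.reverse ++ [b, a] := by
      have := congrArg List.reverse hrev
      simpa using this
    exact ⟨rest.reverse, b, a, hseq, hcl _ _ _ (hseq ▸ hs)⟩

/-- The empty position belongs to every skeleton. -/
lemma skel_nil_mem {P σ : Set (List M)} (h : IsSkeleton P σ) : ([] : List M) ∈ σ := by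
  obtain ⟨s, hs⟩ := h.2.2.1
  suffices H : ∀ n (s : List M), s.length ≤ n → s ∈ σ → ([] : List M) ∈ σ from
    H s.length s le_rfl hs
  intro n
  induction n with
  | zero =>
    intro s hlen hs
    have : s = [] := List.eq_nil_of_length_eq_zero (Nat.le_zero.mp hlen)
    exact this ▸ hs
  | succ n ih =>
    intro s hlen hs
    rcases eq_or_ne s [] with rfl | hne
    · exact hs
    · obtain ⟨t, m, k, rfl, ht⟩ := skel_decomp h s hs hne
      have : t.length ≤ n := by simp at hlen; omega
      exact ih t this ht

/-- Covering lemma: one direction of the PER lemma. -/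
lemma skel_cover {P : Set (List M)} {R : List M → List M → Prop}
    {σ τ : Set (List M)} (hPpc : PrefClosed P) (hR : IsIdent P R)
    (hσ : IsSkeleton P σ) (hτ : IsSkeleton P τ) (h : SkelLe P R σ τ) :
    ∀ s ∈ σ, ∃ t ∈ τ, R s t := by
  intro s hs
  suffices H : ∀ n (s : List M), s.length ≤ n → s ∈ σ → ∃ t ∈ τ, R s t from
    H s.length s le_rfl hs
  intro n
  induction n with
  | zero =>
    intro s hlen hs
    have hse : s = [] := List.eq_nil_of_length_eq_zero (Nat.le_zero.mp hlen)
    subst hse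
    exact ⟨[], skel_nil_mem hτ, hR.refl [] (hτ.1 (skel_nil_mem hτ))⟩
  | succ n ih =>
    intro s hlen hs
    rcases eq_or_ne s [] with rfl | hne
    · exact ⟨[], skel_nil_mem hτ, hR.refl [] (hτ.1 (skel_nil_mem hτ))⟩
    · obtain ⟨u, m, k, rfl, hu⟩ := skel_decomp hσ s hs hne
      have hul : u.length ≤ n := by simp at hlen; omega
      obtain ⟨t, ht, hut⟩ := ih u hul hu
      have humP : u ++ [m] ∈ P := hPpc ⟨[k], by simp⟩ (hσ.1 hs)
      obtain ⟨l, hlP, hml⟩ := hR.extend m hut humP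
      obtain ⟨r, hr, hkr⟩ := h u m k hs t ht l hlP hml
      refine ⟨t ++ [l, r], hr, ?_⟩
      exact hkr

/-- **PER lemma for skeletons**: (a) identified skeletons cover each other up to
the identification of positions; (b) the identification of skeletons is symmetric
and transitive on the skeletons on `P`. -/
theorem skeleton_identification_per (P : Set (List M))
    (R : List M → List M → Prop) (hPne : P.Nonempty) (hPpc : PrefClosed P)
    (hR : IsIdent P R) :
    (∀ σ τ : Set (List M), IsSkeleton P σ → IsSkeleton P τ →
      SkelEquiv P R σ τ → ∀ s ∈ σ, ∃ t ∈ τ, R s t) ∧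
    (∀ σ τ : Set (List M), IsSkeleton P σ → IsSkeleton P τ →
      SkelEquiv P R σ τ → SkelEquiv P R τ σ) ∧
    (∀ σ τ υ : Set (List M), IsSkeleton P σ → IsSkeleton P τ → IsSkeleton P υ →
      SkelEquiv P R σ τ → SkelEquiv P R τ υ → SkelEquiv P R σ υ) := by
  have cov : ∀ σ τ : Set (List M), IsSkeleton P σ → IsSkeleton P τ →
      SkelEquiv P R σ τ → ∀ s ∈ σ, ∃ t ∈ τ, R s t := by
    intro σ τ hσ hτ hστ
    exact skel_cover hPpc hR hσ hτ hστ.1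
  refine ⟨cov, fun σ τ _ _ h => ⟨h.2, h.1⟩, ?_⟩
  intro σ τ υ hσ hτ hυ hστ hτυ
  have key : ∀ (σ τ υ : Set (List M)), IsSkeleton P σ → IsSkeleton P τ →
      IsSkeleton P υ → SkelEquiv P R σ τ → SkelEquiv P R τ υ →
      SkelLe P R σ υ := by
    intro σ τ υ hσ hτ hυ hστ hτυ
    intro s m n hsmn u hu l hlP hml
    have hsσ : s ∈ σ := hσ.2.2.2.1 s m n hsmn
    obtain ⟨t, ht, hst⟩ := cov σ τ hσ hτ hστ s hsσ
    have hsmP : s ++ [m] ∈ P := hPpc ⟨[n], by simp⟩ (hσ.1 hsmn)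
    obtain ⟨l', hl'P, hml'⟩ := hR.extend m hst hsmP
    obtain ⟨r', hr', hnr'⟩ := hστ.1 s m n hsmn t ht l' hl'P hml'
    have htu : R (t ++ [l']) (u ++ [l]) := hR.trans (hR.symm hml') hml
    obtain ⟨r, hrυ, hrr⟩ := hτυ.1 t l' r' hr' u hu l hlP htu
    exact ⟨r, hrυ, hR.trans hnr' hrr⟩
  constructor
  · exact key σ τ υ hσ hτ hυ hστ hτυ
  · exact key υ τ σ hυ hτ hσ ⟨hτυ.2, hτυ.1⟩ ⟨hστ.2, hστ.1⟩


end GameSemantics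
end

section
/- First t-skeleton/p-strategy lemma (purified form): Let P ⊆ List M be nonempty and prefix-closed and ≃ an identification of positions on P. Suppose g ⊆ P is nonempty and prefix-closed, satisfies ST2 on even-length members (s·m·n, t·l·r ∈ g^Even with s·m ≃ t·l imply s·m·n ≃ t·l·r) and ST3 (s ∈ g, t ∈ P, s ≃ t imply t ∈ g). If S ⊆ P is a t-skeleton implementing g — that is, S ⊆ g; s·m ∈ g^Odd and s ∈ S imply s·m ∈ S; and for every s·m·n ∈ g^Even with s ∈ S there exists s·m·n′ ∈ S with s·m·n ≃ s·m·n′ — then S is valid: for all s·m·n ∈ S^Even and s̃·m̃ ∈ S^Odd with s·m ≃ s̃·m̃ there exists s̃·m̃·ñ ∈ S with s·m·n ≃ s̃·m̃·ñ. (This is the paper's first t-skeleton/p-strategy lemma, with the predicative game specialized to its set of positions and identification of actual positions; g satisfies the axioms of a p-strategy apart from the implementability axiom PST, which is the hypothesis on S.) -/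
/-!
First t-skeleton/p-strategy lemma, purified form (Lemma 4.63 of "Game semantics
of Martin-Löf type theory").  Positions are finite lists over a type `M` of
moves.
-/

namespace GameSemantics

variable {M : Type*}

/-- **First t-skeleton/p-strategy lemma (purified form)**: if `g ⊆ P` is nonempty,
prefix-closed and satisfies ST2 (on even-length members) and ST3, and `S ⊆ P` is
a t-skeleton implementing `g`, then `S` is valid. -/
theorem first_tskeleton_pstrategy_lemma (P : Set (List M))
    (R : List M → List M → Prop) (hPne : P.Nonempty) (hPpc : PrefClosed P)
    (hR : IsIdent P R)
    -- `g` satisfies the axioms of a p-strategy apart from PST: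
    (g : Set (List M)) (hgP : g ⊆ P) (hgne : g.Nonempty) (hgpc : PrefClosed g)
    (hST2 : ∀ (s t : List M) (m n l r : M),
      s ++ [m, n] ∈ g → Even (s ++ [m, n]).length →
      t ++ [l, r] ∈ g → Even (t ++ [l, r]).length →
      R (s ++ [m]) (t ++ [l]) → R (s ++ [m, n]) (t ++ [l, r]))
    (hST3 : ∀ s t : List M, s ∈ g → t ∈ P → R s t → t ∈ g)
    -- `S` is a t-skeleton:
    (S : Set (List M)) (hSP : S ⊆ P) (hSne : S.Nonempty) (hSpc : PrefClosed S)
    (hSdet : ∀ (s : List M) (m n n' : M), s ++ [m, n] ∈ S → s ++ [m, n'] ∈ S →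
      Even (s ++ [m, n]).length → n = n')
    -- `S` implements `g`:
    (hSg : S ⊆ g)
    (hOinc : ∀ (s : List M) (m : M), s ++ [m] ∈ g → Odd (s ++ [m]).length →
      s ∈ S → s ++ [m] ∈ S)
    (hImpl : ∀ (s : List M) (m n : M), s ++ [m, n] ∈ g →
      Even (s ++ [m, n]).length → s ∈ S →
      ∃ n' : M, s ++ [m, n'] ∈ S ∧ R (s ++ [m, n]) (s ++ [m, n'])) :
    -- then `S` is valid:
    ∀ (s : List M) (m n : M), s ++ [m, n] ∈ S → Even (s ++ [m, n]).length →
      ∀ (s' : List M) (m' : M), s' ++ [m'] ∈ S → Odd (s' ++ [m']).length →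
        R (s ++ [m]) (s' ++ [m']) →
        ∃ n' : M, s' ++ [m', n'] ∈ S ∧ R (s ++ [m, n]) (s' ++ [m', n']) := by
  intro s m n hmn hev s' m' hm' hodd hRel
  have hmn' : (s ++ [m]) ++ [n] ∈ S := by simpa using hmn
  obtain ⟨n₀, hP0, hR0⟩ := hR.extend n hRel (hSP hmn')
  have hg0 : s' ++ [m', n₀] ∈ g := by
    have := hST3 _ _ (hSg hmn') hP0 hR0
    simpa using this
  have hlen := hR.length_eq hR0
  have heven : Even (s' ++ [m', n₀]).length := by
    have : (s' ++ [m', n₀]).length = (s ++ [m, n]).length := by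
      simpa using hlen.symm
    rw [this]; exact hev
  have hs'S : s' ∈ S := hSpc ⟨[m'], rfl⟩ hm'
  obtain ⟨n', hn'S, hRn'⟩ := hImpl s' m' n₀ hg0 heven hs'S
  exact ⟨n', hn'S, hR.trans (by simpa using hR0) hRn'⟩

end GameSemantics
end

section
/- Deterministic-join completeness implies directed and bounded completeness: Let 𝒯 be a set of t-skeletons that is deterministic-join complete, i.e. whenever 𝒮 ⊆ 𝒯 is nonempty, pairwise consistent and deterministic (s·m·n, s·m·n′ ∈ (⋃𝒮)^Even imply n = n′), one has ⋃𝒮 ∈ 𝒯. Order 𝒯 by σ ≤ τ iff σ ≍ τ and σ ⊆ τ. Then ≤ is a partial order on 𝒯; every nonempty ≤-directed subset D ⊆ 𝒯 has a least upper bound in (𝒯, ≤), namely ⋃D; and every nonempty subset of 𝒯 that is bounded above in (𝒯, ≤) has a least upper bound in (𝒯, ≤), namely its union. -/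
/-!
Deterministic-join completeness implies directed and bounded completeness
(remark after Definition 4.23 of "Game semantics of Martin-Löf type theory").
Positions are finite lists over a type `M` of moves.
-/

namespace GameSemantics

variable {M : Type*}

/-- A t-skeleton: nonempty, prefix-closed, deterministic on even-length
positions. -/
def TSkelAbs (S : Set (List M)) : Prop :=
  S.Nonempty ∧ PrefClosed S ∧
    ∀ (s : List M) (m n n' : M), s ++ [m, n] ∈ S → s ++ [m, n'] ∈ S →
      Even (s ++ [m, n]).length → n = n'

/-- The order `σ ≤ τ` on t-skeletons: `σ ≍ τ` and `σ ⊆ τ`. -/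
def TLeOrd (σ τ : Set (List M)) : Prop :=
  ConsistentPair σ τ ∧ σ ⊆ τ

private lemma cons_of_bound {σ τ υ : Set (List M)} (h1 : TLeOrd σ υ) (h2 : TLeOrd τ υ) :
    ConsistentPair σ τ := by
  intro s m hm hodd hs
  rcases hm with hm | hm
  · have := h2.1 s m (Or.inr (h1.2 hm)) hodd ⟨hs.2, h1.2 hs.1⟩
    exact ⟨hm, this.1⟩
  · have := h1.1 s m (Or.inr (h2.2 hm)) hodd ⟨hs.1, h2.2 hs.2⟩
    exact ⟨this.1, hm⟩

private lemma key (𝒯 : Set (Set (List M))) (h𝒯 : ∀ S ∈ 𝒯, TSkelAbs S)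
    (hdj : ∀ 𝒮 ⊆ 𝒯, 𝒮.Nonempty → (∀ σ ∈ 𝒮, ∀ τ ∈ 𝒮, ConsistentPair σ τ) →
      (∀ (s : List M) (m n n' : M), s ++ [m, n] ∈ ⋃₀ 𝒮 → s ++ [m, n'] ∈ ⋃₀ 𝒮 →
        Even (s ++ [m, n]).length → n = n') →
      ⋃₀ 𝒮 ∈ 𝒯)
    (𝒮 : Set (Set (List M))) (hsub : 𝒮 ⊆ 𝒯) (hne : 𝒮.Nonempty)
    (hub : ∀ σ ∈ 𝒮, ∀ σ' ∈ 𝒮, ∃ υ ∈ 𝒯, TLeOrd σ υ ∧ TLeOrd σ' υ) :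
    ⋃₀ 𝒮 ∈ 𝒯 ∧ (∀ σ ∈ 𝒮, TLeOrd σ (⋃₀ 𝒮)) ∧
      ∀ τ ∈ 𝒯, (∀ σ ∈ 𝒮, TLeOrd σ τ) → TLeOrd (⋃₀ 𝒮) τ := by
  have hpc : ∀ σ ∈ 𝒮, ∀ τ ∈ 𝒮, ConsistentPair σ τ := by
    intro σ hσ τ hτ
    obtain ⟨υ, _, h1, h2⟩ := hub σ hσ τ hτ
    exact cons_of_bound h1 h2
  have hdet : ∀ (s : List M) (m n n' : M), s ++ [m, n] ∈ ⋃₀ 𝒮 → s ++ [m, n'] ∈ ⋃₀ 𝒮 →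
      Even (s ++ [m, n]).length → n = n' := by
    intro s m n n' h1 h2 hev
    obtain ⟨σ, hσ, h1⟩ := h1
    obtain ⟨τ, hτ, h2⟩ := h2
    obtain ⟨υ, hυ, hb1, hb2⟩ := hub σ hσ τ hτ
    exact (h𝒯 υ hυ).2.2 s m n n' (hb1.2 h1) (hb2.2 h2) hev
  refine ⟨hdj 𝒮 hsub hne hpc hdet, ?_, ?_⟩
  · intro σ hσ
    refine ⟨?_, fun x hx => ⟨σ, hσ, hx⟩⟩
    intro s m hm hodd hs
    rcases hm with hm | hm
    · exact ⟨hm, σ, hσ, hm⟩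
    · obtain ⟨τ, hτ, hm⟩ := hm
      have hsτ : s ∈ τ := (h𝒯 τ (hsub hτ)).2.1 (List.prefix_append s [m]) hm
      have := hpc σ hσ τ hτ s m (Or.inr hm) hodd ⟨hs.1, hsτ⟩
      exact ⟨this.1, τ, hτ, hm⟩
  · intro τ hτ hall
    refine ⟨?_, fun x hx => by obtain ⟨σ, hσ, hx⟩ := hx; exact (hall σ hσ).2 hx⟩
    intro s m hm hodd hs
    obtain ⟨σ0, hσ0, hsσ0⟩ := hs.1
    rcases hm with hm | hm
    · obtain ⟨σ, hσ, hm⟩ := hm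
      exact ⟨⟨σ, hσ, hm⟩, (hall σ hσ).2 hm⟩
    · have := (hall σ0 hσ0).1 s m (Or.inr hm) hodd ⟨hsσ0, hs.2⟩
      exact ⟨⟨σ0, hσ0, this.1⟩, hm⟩

/-- **Det-j completeness implies directed and bounded completeness**: if `𝒯` is a
deterministic-join complete set of t-skeletons, then `≤` is a partial order on
`𝒯`, every nonempty `≤`-directed subset of `𝒯` has its union as least upper
bound in `(𝒯, ≤)`, and every nonempty subset of `𝒯` bounded above in `(𝒯, ≤)`
has its union as least upper bound in `(𝒯, ≤)`. -/
theorem detjoin_directed_bounded_complete (𝒯 : Set (Set (List M)))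
    (h𝒯 : ∀ S ∈ 𝒯, TSkelAbs S)
    (hdj : ∀ 𝒮 ⊆ 𝒯, 𝒮.Nonempty → (∀ σ ∈ 𝒮, ∀ τ ∈ 𝒮, ConsistentPair σ τ) →
      (∀ (s : List M) (m n n' : M), s ++ [m, n] ∈ ⋃₀ 𝒮 → s ++ [m, n'] ∈ ⋃₀ 𝒮 →
        Even (s ++ [m, n]).length → n = n') →
      ⋃₀ 𝒮 ∈ 𝒯) :
    (∀ σ ∈ 𝒯, TLeOrd σ σ) ∧
    (∀ σ ∈ 𝒯, ∀ τ ∈ 𝒯, TLeOrd σ τ → TLeOrd τ σ → σ = τ) ∧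
    (∀ σ ∈ 𝒯, ∀ τ ∈ 𝒯, ∀ υ ∈ 𝒯, TLeOrd σ τ → TLeOrd τ υ → TLeOrd σ υ) ∧
    (∀ D ⊆ 𝒯, D.Nonempty → DirectedOn TLeOrd D →
      ⋃₀ D ∈ 𝒯 ∧ (∀ σ ∈ D, TLeOrd σ (⋃₀ D)) ∧
        ∀ τ ∈ 𝒯, (∀ σ ∈ D, TLeOrd σ τ) → TLeOrd (⋃₀ D) τ) ∧
    (∀ B ⊆ 𝒯, B.Nonempty → (∃ τ ∈ 𝒯, ∀ σ ∈ B, TLeOrd σ τ) →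
      ⋃₀ B ∈ 𝒯 ∧ (∀ σ ∈ B, TLeOrd σ (⋃₀ B)) ∧
        ∀ τ ∈ 𝒯, (∀ σ ∈ B, TLeOrd σ τ) → TLeOrd (⋃₀ B) τ) := by
  refine ⟨?_, ?_, ?_, ?_, ?_⟩
  · intro σ _
    exact ⟨fun s m hm _ _ => by rcases hm with h | h <;> exact ⟨h, h⟩, subset_rfl⟩
  · intro σ _ τ _ h1 h2
    exact subset_antisymm h1.2 h2.2
  · intro σ _ τ _ υ _ h1 h2
    refine ⟨?_, h1.2.trans h2.2⟩
    intro s m hm hodd hs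
    rcases hm with hm | hm
    · exact ⟨hm, h2.2 (h1.2 hm)⟩
    · have hτ := h2.1 s m (Or.inr hm) hodd ⟨h1.2 hs.1, hs.2⟩
      have hσ := h1.1 s m (Or.inr hτ.1) hodd ⟨hs.1, h1.2 hs.1⟩
      exact ⟨hσ.1, hm⟩
  · intro D hsub hne hdir
    exact key 𝒯 h𝒯 hdj D hsub hne fun σ hσ σ' hσ' =>
      let ⟨υ, hυ, h⟩ := hdir σ hσ σ' hσ'
      ⟨υ, hsub hυ, h⟩
  · intro B hsub hne hbd
    obtain ⟨τ, hτ, hall⟩ := hbd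
    exact key 𝒯 h𝒯 hdj B hsub hne fun σ hσ σ' hσ' => ⟨τ, hτ, hall σ hσ, hall σ' hσ'⟩

end GameSemantics
end
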